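/- Let A⁺, A⁻ ⊆ ℝⁿ be disjoint finite sets with 0 ∈ A⁺ and A = A⁺ ∪ A⁻, and let v : A → ℝ satisfy v_α > 0 for all α ∈ A⁺ \ {0}. Let γ ∈ ℝ with v_0 + γ > 0, and let w : A → ℝ agree with v except that w_0 = v_0 + γ. Then w ∈ D_{(A⁺,A⁻)} if and only if there exist vectors (τ^{(β)})_{β∈A⁻} ⊆ ℝⁿ such that for every β ∈ A⁻: ln(|v_β|/v_α) ≤ ⟨α − β, τ^{(β)}⟩ for all α ∈ A⁺ \ {0}, and ln(|v_β|) − ln(v_0 + γ) ≤ ⟨−β, τ^{(β)}⟩; these are exactly the constraints of the linear program LP⁺ with c = ln(v_0 + γ). -/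

import Mathlib

open Finset

/-- `Λ(A⁺, β)`: barycentric coordinates of `β` with respect to `A⁺`. -/
def IsBary {n : ℕ} (Ap : Finset (Fin n → ℝ)) (β : Fin n → ℝ) (lam : (Fin n → ℝ) → ℝ) : Prop :=
  (∀ α ∈ Ap, 0 ≤ lam α) ∧ (∑ α ∈ Ap, lam α = 1) ∧ (∑ α ∈ Ap, lam α • α = β)

/-- The set `D_{(A⁺,A⁻)}` cut out by the weighted geometric-mean inequalities. -/
def InDual {n : ℕ} (Ap An : Finset (Fin n → ℝ)) (v : (Fin n → ℝ) → ℝ) : Prop :=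
  (∀ α ∈ Ap, 0 ≤ v α) ∧
  ∀ β ∈ An, ∀ lam : (Fin n → ℝ) → ℝ, IsBary Ap β lam → |v β| ≤ ∏ α ∈ Ap, v α ^ lam α

section Farkas

open scoped RealInnerProductSpace

variable {H : Type*} [NormedAddCommGroup H] [InnerProductSpace ℝ H]

/-- The convex cone generated by finitely many vectors, as a set. -/
def coneOf {ι : Type*} (s : Finset ι) (f : ι → H) : Set H :=
  {x | ∃ μ : ι → ℝ, (∀ i ∈ s, 0 ≤ μ i) ∧ ∑ i ∈ s, μ i • f i = x}

theorem coneOf_isClosed [FiniteDimensional ℝ H] {ι : Type*} [DecidableEq ι]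
    (s : Finset ι) (f : ι → H) : IsClosed (coneOf s f) := by
  induction s using Finset.strongInduction with
  | _ s ih =>
    by_cases hli : LinearIndependent ℝ (fun i : s => f i)
    · -- linearly independent case: closed embedding of the orthant
      set T : (s → ℝ) →ₗ[ℝ] H :=
        { toFun := fun μ => ∑ i : s, μ i • f i
          map_add' := by intro a b; simp [add_smul, Finset.sum_add_distrib]
          map_smul' := by
            intro c a
            simp only [RingHom.id_apply, Finset.smul_sum, smul_smul]
            exact Finset.sum_congr rfl fun i _ => rfl } with hT
      have hker : LinearMap.ker T = ⊥ := by
        rw [LinearMap.ker_eq_bot']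
        intro m hm
        have := Fintype.linearIndependent_iff.1 hli m hm
        funext i; exact this i
      have hemb : Topology.IsClosedEmbedding T := T.isClosedEmbedding_of_injective hker
      have horth : IsClosed {μ : s → ℝ | ∀ i, 0 ≤ μ i} := by
        have : {μ : s → ℝ | ∀ i, 0 ≤ μ i} = ⋂ i, {μ : s → ℝ | 0 ≤ μ i} := by
          ext; simp [Set.mem_iInter]
        rw [this]
        exact isClosed_iInter fun i => isClosed_le continuous_const (continuous_apply i)
      have hset : coneOf s f = T '' {μ : s → ℝ | ∀ i, 0 ≤ μ i} := by
        ext x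
        constructor
        · rintro ⟨μ, hμ, hsum⟩
          refine ⟨fun i => μ i, fun i => hμ i i.2, ?_⟩
          simp only [hT, LinearMap.coe_mk, AddHom.coe_mk]
          show ∑ i : s, μ i • f i = x
          rw [Finset.sum_coe_sort s (fun i => μ i • f i)]
          exact hsum
        · rintro ⟨μ, hμ, rfl⟩
          refine ⟨fun i => if h : i ∈ s then μ ⟨i, h⟩ else 0, fun i hi => by simp [hi, hμ ⟨i, hi⟩], ?_⟩
          simp only [hT, LinearMap.coe_mk, AddHom.coe_mk]
          rw [← Finset.sum_coe_sort s (fun i => (if h : i ∈ s then μ ⟨i, h⟩ else 0) • f i)]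
          apply Finset.sum_congr rfl
          intro i _
          simp [i.2]
      rw [hset]
      exact hemb.isClosedMap _ horth
    · -- linearly dependent: union of cones over erased sets
      obtain ⟨g, hg0, j, hgj⟩ := Fintype.not_linearIndependent_iff.1 hli
      -- wlog there is a positive coefficient
      obtain ⟨c, hc0, j', hcj⟩ :
          ∃ c : s → ℝ, ∑ i : s, c i • f i = 0 ∧ ∃ j, 0 < c j := by
        rcases lt_or_gt_of_ne hgj with h | h
        · exact ⟨-g, by simpa using hg0, j, by simpa using h⟩
        · exact ⟨g, hg0, j, h⟩
      have hsub : coneOf s f ⊆ ⋃ i ∈ s, coneOf (s.erase i) f := by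
        rintro x ⟨μ, hμ, hsum⟩
        -- extend c to ι
        set C : ι → ℝ := fun i => if h : i ∈ s then c ⟨i, h⟩ else 0 with hC
        have hCsum : ∑ i ∈ s, C i • f i = 0 := by
          rw [← Finset.sum_coe_sort s (fun i => C i • f i)]
          rw [← hc0]
          apply Finset.sum_congr rfl
          intro i _
          simp [hC, i.2]
        have hP : (s.filter (fun i => 0 < C i)).Nonempty := by
          refine ⟨(j' : ι), Finset.mem_filter.2 ⟨j'.2, ?_⟩⟩
          simpa [hC, j'.2] using hcj
        obtain ⟨i₀, hi₀mem, hi₀min⟩ :=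
          Finset.exists_min_image (s.filter (fun i => 0 < C i)) (fun i => μ i / C i) hP
        have hi₀s : i₀ ∈ s := (Finset.mem_filter.1 hi₀mem).1
        have hCi₀ : 0 < C i₀ := (Finset.mem_filter.1 hi₀mem).2
        set t : ℝ := μ i₀ / C i₀ with ht
        have ht0 : 0 ≤ t := div_nonneg (hμ i₀ hi₀s) hCi₀.le
        have hμ' : ∀ i ∈ s, 0 ≤ μ i - t * C i := by
          intro i hi
          rcases le_or_gt (C i) 0 with h | h
          · have : t * C i ≤ 0 := mul_nonpos_of_nonneg_of_nonpos ht0 h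
            linarith [hμ i hi]
          · have := hi₀min i (Finset.mem_filter.2 ⟨hi, h⟩)
            rw [div_le_div_iff₀ hCi₀ h] at this
            have h2 : μ i₀ / C i₀ * C i ≤ μ i := by
              rw [div_mul_eq_mul_div, div_le_iff₀ hCi₀]
              exact this
            rw [ht]
            linarith
        refine Set.mem_iUnion.2 ⟨i₀, Set.mem_iUnion.2 ⟨hi₀s, ⟨fun i => μ i - t * C i,
          fun i hi => hμ' i (Finset.mem_of_mem_erase hi), ?_⟩⟩⟩
        have hzero : (μ i₀ - t * C i₀) = 0 := by
          rw [ht, div_mul_cancel₀ _ hCi₀.ne', sub_self]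
        have : ∑ i ∈ s.erase i₀, (μ i - t * C i) • f i
            = ∑ i ∈ s, (μ i - t * C i) • f i := by
          rw [← Finset.sum_erase_add s _ hi₀s, hzero]
          simp
        rw [this]
        have : ∑ i ∈ s, (μ i - t * C i) • f i
            = ∑ i ∈ s, μ i • f i - t • ∑ i ∈ s, C i • f i := by
          rw [Finset.smul_sum, ← Finset.sum_sub_distrib]
          apply Finset.sum_congr rfl
          intro i _
          rw [sub_smul, smul_smul]
        rw [this, hCsum, smul_zero, sub_zero, hsum]
      have hsup : ⋃ i ∈ s, coneOf (s.erase i) f ⊆ coneOf s f := by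
        rintro x hx
        obtain ⟨i, hi⟩ := Set.mem_iUnion.1 hx
        obtain ⟨his, μ, hμ, hsum⟩ := Set.mem_iUnion.1 hi
        refine ⟨fun k => if k = i then 0 else μ k, fun k hk => ?_, ?_⟩
        · dsimp only
          by_cases hk' : k = i
          · simp [hk']
          · simpa [hk'] using hμ k (Finset.mem_erase.2 ⟨hk', hk⟩)
        · rw [← Finset.sum_erase_add s _ his]
          have h1 : (if i = i then (0:ℝ) else μ i) • f i = 0 := by simp
          rw [h1, add_zero, ← hsum]
          exact Finset.sum_congr rfl fun k hk => by dsimp only; rw [if_neg (Finset.ne_of_mem_erase hk)]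
      have : coneOf s f = ⋃ i ∈ s, coneOf (s.erase i) f := le_antisymm hsub hsup
      rw [this]
      exact Set.Finite.isClosed_biUnion s.finite_toSet
        (fun i hi => ih (s.erase i) (Finset.erase_ssubset hi))

/-- Farkas lemma: separation from a finitely generated cone. -/
theorem farkas_sep [FiniteDimensional ℝ H] {ι : Type*} [DecidableEq ι]
    (s : Finset ι) (f : ι → H) (b : H) (hb : b ∉ coneOf s f) :
    ∃ y : H, (∀ i ∈ s, 0 ≤ ⟪f i, y⟫) ∧ ⟪b, y⟫ < 0 := by
  set K : ConvexCone ℝ H :=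
    { carrier := coneOf s f
      smul_mem' := by
        rintro r hr x ⟨μ, hμ, hsum⟩
        exact ⟨fun i => r * μ i, fun i hi => mul_nonneg hr.le (hμ i hi), by
          rw [← hsum, Finset.smul_sum]; apply Finset.sum_congr rfl; intro i _;
          rw [smul_smul]⟩
      add_mem' := by
        rintro x ⟨μ, hμ, hμsum⟩ y ⟨ν, hν, hνsum⟩
        exact ⟨fun i => μ i + ν i, fun i hi => add_nonneg (hμ i hi) (hν i hi), by
          rw [← hμsum, ← hνsum, ← Finset.sum_add_distrib]
          apply Finset.sum_congr rfl; intro i _; rw [add_smul]⟩ } with hK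
  have hne : (K : Set H).Nonempty := ⟨0, ⟨fun _ => 0, fun i _ => le_refl 0, by simp⟩⟩
  have hcl : IsClosed (K : Set H) := coneOf_isClosed s f
  set P : ProperCone ℝ H :=
    { carrier := K
      add_mem' := fun hx hy => K.add_mem' hx hy
      zero_mem' := ⟨fun _ => 0, fun i _ => le_refl 0, by simp⟩
      smul_mem' := by
        intro c x hx
        rcases eq_or_lt_of_le c.2 with hc | hc
        · have hc' : c = 0 := NNReal.eq hc.symm
          rw [hc', zero_smul]
          exact ⟨fun _ => 0, fun i _ => le_refl 0, by simp⟩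
        · exact K.smul_mem' hc hx
      isClosed' := hcl } with hP
  obtain ⟨y, hy1, hy2⟩ := P.hyperplane_separation' (x₀ := b) hb
  replace hy1 : ∀ x ∈ coneOf s f, 0 ≤ ⟪x, y⟫ := hy1
  refine ⟨y, fun i hi => ?_, hy2⟩
  apply hy1
  refine ⟨fun k => if k = i then 1 else 0, fun k _ => by dsimp only; split <;> norm_num, ?_⟩
  have h1 : ∀ k ∈ s, (if k = i then (1:ℝ) else 0) • f k = if k = i then f k else 0 := by
    intro k _; split <;> simp
  rw [Finset.sum_congr rfl h1, Finset.sum_ite_eq' s i f, if_pos hi]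
  

lemma backward_beta {n : ℕ} (Ap : Finset (Fin n → ℝ)) (w : (Fin n → ℝ) → ℝ)
    (hwpos : ∀ α ∈ Ap, 0 < w α) (β : Fin n → ℝ) (vb : ℝ) (hvb : 0 ≤ vb)
    (τ : Fin n → ℝ) (h : ∀ α ∈ Ap, vb ≤ w α * Real.exp (∑ i, (α i - β i) * τ i))
    (lam : (Fin n → ℝ) → ℝ) (hlam : IsBary Ap β lam) :
    vb ≤ ∏ α ∈ Ap, w α ^ lam α := by
  obtain ⟨hlam0, hlam1, hlamsum⟩ := hlam
  rcases eq_or_lt_of_le hvb with h0 | h0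
  · rw [← h0]
    exact le_of_lt (Finset.prod_pos fun α hα => Real.rpow_pos_of_pos (hwpos α hα) _)
  have key : ∀ i, ∑ α ∈ Ap, lam α * (α i - β i) = 0 := by
    intro i
    have h1 : (∑ α ∈ Ap, lam α • α) i = β i := by rw [hlamsum]
    rw [Finset.sum_apply] at h1
    simp only [Pi.smul_apply, smul_eq_mul] at h1
    have h2 : ∑ α ∈ Ap, lam α * (α i - β i)
        = (∑ α ∈ Ap, lam α * α i) - (∑ α ∈ Ap, lam α) * β i := by
      rw [Finset.sum_mul, ← Finset.sum_sub_distrib]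
      exact Finset.sum_congr rfl fun α _ => by ring
    rw [h2, hlam1, one_mul, h1, sub_self]
  calc vb = vb ^ (1:ℝ) := (Real.rpow_one vb).symm
    _ = vb ^ (∑ α ∈ Ap, lam α) := by rw [hlam1]
    _ = ∏ α ∈ Ap, vb ^ lam α := Real.rpow_sum_of_pos h0 _ _
    _ ≤ ∏ α ∈ Ap, (w α * Real.exp (∑ i, (α i - β i) * τ i)) ^ lam α := by
        apply Finset.prod_le_prod
        · intro α hα; exact Real.rpow_nonneg hvb _
        · intro α hα; exact Real.rpow_le_rpow hvb (h α hα) (hlam0 α hα)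
    _ = (∏ α ∈ Ap, w α ^ lam α)
        * ∏ α ∈ Ap, Real.exp (∑ i, (α i - β i) * τ i) ^ lam α := by
        rw [← Finset.prod_mul_distrib]
        exact Finset.prod_congr rfl fun α hα =>
          Real.mul_rpow (hwpos α hα).le (Real.exp_nonneg _)
    _ = (∏ α ∈ Ap, w α ^ lam α)
        * Real.exp (∑ α ∈ Ap, (∑ i, (α i - β i) * τ i) * lam α) := by
        rw [Real.exp_sum]
        congr 1
        exact Finset.prod_congr rfl fun α hα => by
          rw [Real.rpow_def_of_pos (Real.exp_pos _), Real.log_exp]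
    _ = ∏ α ∈ Ap, w α ^ lam α := by
        have hz : ∑ α ∈ Ap, (∑ i, (α i - β i) * τ i) * lam α = 0 := by
          have hs : ∀ α ∈ Ap, (∑ i, (α i - β i) * τ i) * lam α
              = ∑ i, lam α * (α i - β i) * τ i := by
            intro α _
            rw [Finset.sum_mul]
            exact Finset.sum_congr rfl fun i _ => by ring
          rw [Finset.sum_congr rfl hs, Finset.sum_comm]
          apply Finset.sum_eq_zero
          intro i _
          rw [← Finset.sum_mul, key i, zero_mul]
        rw [hz, Real.exp_zero, mul_one]

lemma forward_beta {n : ℕ} (Ap : Finset (Fin n → ℝ)) (w : (Fin n → ℝ) → ℝ)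
    (hwpos : ∀ α ∈ Ap, 0 < w α) (β : Fin n → ℝ) (vb : ℝ) (hvb : 0 ≤ vb)
    (hmain : ∀ lam : (Fin n → ℝ) → ℝ, IsBary Ap β lam → vb ≤ ∏ α ∈ Ap, w α ^ lam α) :
    ∃ τ : Fin n → ℝ, ∀ α ∈ Ap, vb ≤ w α * Real.exp (∑ i, (α i - β i) * τ i) := by
  classical
  rcases eq_or_lt_of_le hvb with h0 | h0
  · exact ⟨0, fun α hα => le_of_lt (by rw [← h0]; exact mul_pos (hwpos α hα) (Real.exp_pos _))⟩
  set L := Real.log vb with hL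
  set F : (Fin n → ℝ) → EuclideanSpace ℝ (Fin (n+1)) :=
    fun α => WithLp.toLp 2 (Fin.snoc (fun i => α i - β i) (Real.log (w α) - L)) with hF
  set b : EuclideanSpace ℝ (Fin (n+1)) := WithLp.toLp 2 (Fin.snoc (fun _ => 0) (-1)) with hb
  have hbnot : b ∉ coneOf Ap F := by
    rintro ⟨μ, hμ, hsum⟩
    have hcoord : ∀ j : Fin (n+1), ∑ α ∈ Ap, μ α * F α j = b j := by
      intro j
      rw [← hsum, WithLp.ofLp_sum, Finset.sum_apply]
      exact Finset.sum_congr rfl fun α _ => rfl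
    have hlast : ∑ α ∈ Ap, μ α * (Real.log (w α) - L) = -1 := by
      have := hcoord (Fin.last n)
      simpa [hF, hb, Fin.snoc_last] using this
    have hcast : ∀ i : Fin n, ∑ α ∈ Ap, μ α * (α i - β i) = 0 := by
      intro i
      have := hcoord (Fin.castSucc i)
      simpa [hF, hb, Fin.snoc_castSucc] using this
    set t := ∑ α ∈ Ap, μ α with htdef
    have ht0 : 0 ≤ t := Finset.sum_nonneg hμ
    rcases eq_or_lt_of_le ht0 with ht | ht
    · have hall : ∀ α ∈ Ap, μ α = 0 :=
        (Finset.sum_eq_zero_iff_of_nonneg hμ).1 ht.symm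
      rw [Finset.sum_congr rfl (fun α hα => by rw [hall α hα, zero_mul])] at hlast
      simp at hlast
    · set lam : (Fin n → ℝ) → ℝ := fun α => μ α / t with hlam
      have hbary : IsBary Ap β lam := by
        refine ⟨fun α hα => div_nonneg (hμ α hα) ht0, ?_, ?_⟩
        · rw [← Finset.sum_div, ← htdef, div_self (ne_of_gt ht)]
        · funext i
          rw [Finset.sum_apply]
          simp only [Pi.smul_apply, smul_eq_mul, hlam]
          have h1 : ∑ α ∈ Ap, μ α * α i = t * β i := by
            have h2 : ∑ α ∈ Ap, (μ α * α i - μ α * β i) = 0 := by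
              rw [← Finset.sum_congr rfl (fun α _ => mul_sub (μ α) (α i) (β i))]
              exact hcast i
            rw [Finset.sum_sub_distrib, sub_eq_zero] at h2
            rw [h2, ← Finset.sum_mul]
          have h3 : ∀ α ∈ Ap, μ α / t * α i = (μ α * α i) / t := fun α _ => by ring
          rw [Finset.sum_congr rfl h3, ← Finset.sum_div, h1, mul_comm,
            mul_div_assoc, div_self (ne_of_gt ht), mul_one]
      have hlog : L ≤ ∑ α ∈ Ap, lam α * Real.log (w α) := by
        have h2 := hmain lam hbary
        have h3 := Real.log_le_log h0 h2
        rwa [Real.log_prod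
          (fun α hα => ne_of_gt (Real.rpow_pos_of_pos (hwpos α hα) _)),
          Finset.sum_congr rfl
            (fun α hα => Real.log_rpow (hwpos α hα) (lam α))] at h3
      have heq : ∑ α ∈ Ap, μ α * (Real.log (w α) - L)
          = t * ((∑ α ∈ Ap, lam α * Real.log (w α)) - L) := by
        rw [mul_sub, Finset.mul_sum]
        have : ∀ α ∈ Ap, t * (lam α * Real.log (w α)) = μ α * Real.log (w α) := by
          intro α _
          rw [hlam]
          field_simp
        rw [Finset.sum_congr rfl this]
        rw [Finset.sum_congr rfl (fun α _ => mul_sub (μ α) (Real.log (w α)) L),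
          Finset.sum_sub_distrib, ← Finset.sum_mul, ← htdef]
      have : (0:ℝ) ≤ ∑ α ∈ Ap, μ α * (Real.log (w α) - L) := by
        rw [heq]
        exact mul_nonneg ht.le (by linarith)
      rw [hlast] at this
      linarith
  obtain ⟨y, hy1, hy2⟩ := farkas_sep Ap F b hbnot
  have hinner : ∀ x z : EuclideanSpace ℝ (Fin (n+1)), ⟪x, z⟫ = ∑ j, x j * z j := by
    intro x z
    simp [PiLp.inner_apply, RCLike.inner_apply, mul_comm]
  have hblast : ⟪b, y⟫ = - y (Fin.last n) := by
    rw [hinner, Fin.sum_univ_castSucc]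
    simp [hb, Fin.snoc_castSucc, Fin.snoc_last]
  have hylast : 0 < y (Fin.last n) := by
    rw [hblast] at hy2; linarith
  refine ⟨fun i => y (Fin.castSucc i) / y (Fin.last n), fun α hα => ?_⟩
  have h1 := hy1 α hα
  rw [hinner, Fin.sum_univ_castSucc] at h1
  simp only [hF, Fin.snoc_castSucc, Fin.snoc_last] at h1
  -- h1 : 0 ≤ ∑ i, (α i - β i) * y i.castSucc + (log (w α) - L) * y (last n)
  have hsum' : ∑ i, (α i - β i) * (y (Fin.castSucc i) / y (Fin.last n))
      = (∑ i, (α i - β i) * y (Fin.castSucc i)) / y (Fin.last n) := by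
    rw [Finset.sum_div]
    exact Finset.sum_congr rfl fun i _ => (mul_div_assoc _ _ _).symm
  have hLle : L ≤ Real.log (w α)
      + ∑ i, (α i - β i) * (y (Fin.castSucc i) / y (Fin.last n)) := by
    have h4 := div_nonneg h1 hylast.le
    rw [add_div, mul_div_assoc, div_self (ne_of_gt hylast), mul_one] at h4
    rw [hsum']
    linarith
  calc vb = Real.exp L := (Real.exp_log h0).symm
    _ ≤ Real.exp (Real.log (w α)
        + ∑ i, (α i - β i) * (y (Fin.castSucc i) / y (Fin.last n))) :=
      Real.exp_le_exp.2 hLle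
    _ = w α * Real.exp (∑ i, (α i - β i) * (y (Fin.castSucc i) / y (Fin.last n))) := by
      rw [Real.exp_add, Real.exp_log (hwpos α hα)]

end Farkas

/-- Shifting the constant coefficient by `γ`, membership of the shifted vector
`w` in `D_{(A⁺,A⁻)}` is equivalent to feasibility of the constraints of the linear program
`LP⁺` with `c = ln(v₀ + γ)` (the inequalities `ln(|v_β|/v_α) ≤ ⟨α−β, τ^{(β)}⟩` for
`α ∈ A⁺ \ {0}` and `ln(|v_β|) − c ≤ ⟨−β, τ^{(β)}⟩`, stated multiplicatively). -/
theorem shifted_dual_membership_iff_LPplus {n : ℕ}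
    (Ap An : Finset (Fin n → ℝ)) (hdisj : Disjoint Ap An) (h0 : (0 : Fin n → ℝ) ∈ Ap)
    (v : (Fin n → ℝ) → ℝ) (hv : ∀ α ∈ Ap, α ≠ 0 → 0 < v α)
    (γ : ℝ) (hγ : 0 < v 0 + γ)
    (w : (Fin n → ℝ) → ℝ) (hw : ∀ δ : Fin n → ℝ, δ ≠ 0 → w δ = v δ) (hw0 : w 0 = v 0 + γ) :
    InDual Ap An w ↔
      ∃ τ : (Fin n → ℝ) → (Fin n → ℝ), ∀ β ∈ An,
        (∀ α ∈ Ap, α ≠ 0 → |v β| ≤ v α * Real.exp (∑ i, (α i - β i) * τ β i)) ∧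
        |v β| ≤ (v 0 + γ) * Real.exp (∑ i, (0 - β i) * τ β i) := by
  classical
  have hwpos : ∀ α ∈ Ap, 0 < w α := by
    intro α hα
    by_cases h : α = 0
    · rw [h, hw0]; exact hγ
    · rw [hw α h]; exact hv α hα h
  have hβv : ∀ β ∈ An, w β = v β := by
    intro β hβ
    have hβ0 : β ≠ 0 := by
      rintro rfl
      exact (Finset.disjoint_left.1 hdisj h0) hβ
    exact hw β hβ0
  constructor
  · rintro ⟨hpos, hmain⟩
    have key : ∀ β : Fin n → ℝ, ∃ τ : Fin n → ℝ, β ∈ An →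
        ∀ α ∈ Ap, |v β| ≤ w α * Real.exp (∑ i, (α i - β i) * τ i) := by
      intro β
      by_cases hβ : β ∈ An
      · obtain ⟨τ, hτ⟩ := forward_beta Ap w hwpos β (|v β|) (abs_nonneg _)
          (fun lam hl => by rw [← hβv β hβ]; exact hmain β hβ lam hl)
        exact ⟨τ, fun _ => hτ⟩
      · exact ⟨0, fun h => absurd h hβ⟩
    choose τ hτ using key
    refine ⟨τ, fun β hβ => ⟨fun α hα hα0 => ?_, ?_⟩⟩
    · have := hτ β hβ α hα
      rwa [hw α hα0] at this
    · have := hτ β hβ 0 h0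
      rw [hw0] at this
      simpa using this
  · rintro ⟨τ, hτ⟩
    refine ⟨fun α hα => (hwpos α hα).le, fun β hβ lam hl => ?_⟩
    rw [hβv β hβ]
    refine backward_beta Ap w hwpos β (|v β|) (abs_nonneg _) (τ β) ?_ lam hl
    intro α hα
    by_cases h : α = 0
    · subst h
      have := (hτ β hβ).2
      rw [← hw0] at this
      simpa using this
    · have := (hτ β hβ).1 α hα h
      rwa [← hw α h] at this
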